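/- arXiv:2504.20875 — 2 statements merged into one kernel-verified Lean document; each statement's English description precedes it below -/
import Mathlib

section
/- For integers a, b, k with k ≥ b > a ≥ 1 and any ℓ ≥ 0, the map sending (π_1,…,π_ℓ) to (π_1 + k(ℓ−1), π_2 + k(ℓ−2), …, π_{ℓ−1} + k, π_ℓ) is a bijection from R'_{a,b,k}(ℓ) to D'_{a,b,k}(ℓ) preserving ℓ_a and ℓ_b and increasing the weight by exactly k·C(ℓ,2); consequently Σ_{π ∈ D'_{a,b,k}(ℓ)} u^{ℓ_a(π)} v^{ℓ_b(π)} q^{|π|} = q^{k·C(ℓ,2)} Σ_{π ∈ R'_{a,b,k}(ℓ)} u^{ℓ_a(π)} v^{ℓ_b(π)} q^{|π|}. -/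
/-- The finite q-Pochhammer symbol `(t;q)_n = ∏_{i=0}^{n-1} (1 - t qⁱ)`. -/
noncomputable def qPoch (t q : ℂ) (n : ℕ) : ℂ := ∏ i ∈ Finset.range n, (1 - t * q ^ i)

/-- The infinite q-Pochhammer symbol `(t;q)_∞ = ∏_{i≥0} (1 - t qⁱ)`. -/
noncomputable def qPochInf (t q : ℂ) : ℂ := ∏' i : ℕ, (1 - t * q ^ i)

/-- The Gaussian binomial coefficient `[A choose B]` in base `q`:
`(q;q)_A / ((q;q)_B (q;q)_{A-B})` for `A ≥ B ≥ 0`, and `0` otherwise. -/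
noncomputable def gbinom (q : ℂ) (A B : ℕ) : ℂ :=
  if B ≤ A then qPoch q q A / (qPoch q q B * qPoch q q (A - B)) else 0

/-- `lcount k c l` is the number of parts of `l` congruent to `c` modulo `k`. -/
def lcount (k c : ℕ) (l : List ℕ) : ℕ := (l.filter (fun x => x % k = c % k)).length

/-- Add `k(ℓ-1), k(ℓ-2), …, k, 0` to the successive parts of a list of length `ℓ`. -/
def stretch (k : ℕ) (l : List ℕ) : List ℕ := l.mapIdx fun i x => x + k * (l.length - 1 - i)

/-- Membership in `R'_{a,b,k}`: parts `≡ a` or `b (mod k)`, only parts `≡ b (mod k)` repeated. -/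
def memR' (a b k : ℕ) (l : List ℕ) : Prop :=
  l.Pairwise (· ≥ ·) ∧ (∀ x ∈ l, 0 < x ∧ (x % k = a % k ∨ x % k = b % k)) ∧
    (∀ x : ℕ, x % k = a % k → l.count x ≤ 1)

/-- Membership in `D'_{a,b,k}`: parts `≡ a` or `b (mod k)`, consecutive parts differ by at
least `k`, strictly whenever the larger part is `≡ a (mod k)`. -/
def memD' (a b k : ℕ) (l : List ℕ) : Prop :=
  l.Pairwise (· ≥ ·) ∧ (∀ x ∈ l, 0 < x ∧ (x % k = a % k ∨ x % k = b % k)) ∧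
    l.Chain' (fun x y => y + k ≤ x ∧ (x % k = a % k → y + k < x))

lemma stretch_nil (k : ℕ) : stretch k [] = [] := rfl

lemma stretch_cons (k x : ℕ) (xs : List ℕ) :
    stretch k (x :: xs) = (x + k * xs.length) :: stretch k xs := by
  simp only [stretch, List.mapIdx_cons, List.length_cons]
  have h1 : (fun i x => x + k * (xs.length + 1 - 1 - (i+1))) = (fun i x => x + k * (xs.length - 1 - i) : ℕ → ℕ → ℕ) := by
    funext i y
    have : xs.length + 1 - 1 - (i+1) = xs.length - 1 - i := by omega
    rw [this]
  rw [h1]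
  simp

lemma stretch_length (k : ℕ) (l : List ℕ) : (stretch k l).length = l.length := by
  simp [stretch]

lemma lcount_stretch (k c : ℕ) (l : List ℕ) : lcount k c (stretch k l) = lcount k c l := by
  induction l with
  | nil => rfl
  | cons x xs ih =>
    simp only [stretch_cons, lcount, List.filter_cons, Nat.add_mul_mod_self_left] at *
    split <;> simp_all

lemma sum_stretch (k : ℕ) (l : List ℕ) :
    (stretch k l).sum = l.sum + k * Nat.choose l.length 2 := by
  induction l with
  | nil => rfl
  | cons x xs ih =>
    simp only [stretch_cons, List.sum_cons, ih, List.length_cons]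
    rw [Nat.choose_succ_succ, Nat.choose_one_right]
    ring

section
variable {a b k : ℕ}

lemma memR'_tail {x : ℕ} {xs : List ℕ} (h : memR' a b k (x :: xs)) : memR' a b k xs := by
  obtain ⟨hs, hf, hc⟩ := h
  exact ⟨hs.of_cons, fun z hz => hf z (List.mem_cons_of_mem _ hz),
    fun v hv => le_trans ((List.sublist_cons_self x xs).count_le v) (hc v hv)⟩

lemma memD'_tail {y : ℕ} {ys : List ℕ} (h : memD' a b k (y :: ys)) : memD' a b k ys :=
  ⟨h.1.of_cons, fun z hz => h.2.1 z (List.mem_cons_of_mem _ hz), List.IsChain.tail h.2.2⟩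

lemma stretch_mem {y : ℕ} {l : List ℕ} (hy : y ∈ stretch k l) :
    ∃ x ∈ l, ∃ m, y = x + k * m := by
  induction l with
  | nil => simp [stretch_nil] at hy
  | cons x xs ih =>
    rw [stretch_cons, List.mem_cons] at hy
    rcases hy with h | h
    · exact ⟨x, List.mem_cons_self, xs.length, h⟩
    · obtain ⟨z, hz, m, hm⟩ := ih h
      exact ⟨z, List.mem_cons_of_mem _ hz, m, hm⟩

lemma chain'_stretch (h : memR' a b k l) :
    (stretch k l).Chain' (fun x y => y + k ≤ x ∧ (x % k = a % k → y + k < x)) := by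
  induction l with
  | nil => simp [stretch_nil, List.Chain']
  | cons x xs ih =>
    have hxs := memR'_tail h
    obtain ⟨hs, hf, hc⟩ := h
    rw [stretch_cons]
    cases xs with
    | nil => simp [stretch_nil, List.Chain']
    | cons x' xs' =>
      rw [stretch_cons]
      rw [stretch_cons] at ih
      refine List.isChain_cons_cons.mpr ⟨⟨?_, ?_⟩, ih hxs⟩
      · have hx'x : x' ≤ x := List.rel_of_pairwise_cons hs List.mem_cons_self
        simp only [List.length_cons, Nat.mul_succ]
        omega
      · intro hmod
        rw [List.length_cons, Nat.add_mul_mod_self_left] at hmod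
        have hx'x : x' ≤ x := List.rel_of_pairwise_cons hs List.mem_cons_self
        rcases lt_or_eq_of_le hx'x with hlt | heq
        · simp only [List.length_cons, Nat.mul_succ]; omega
        · exfalso
          subst heq
          have hcnt := hc x' hmod
          rw [List.count_cons_self, List.count_cons_self] at hcnt
          omega

lemma memD'_stretch (h : memR' a b k l) : memD' a b k (stretch k l) := by
  refine ⟨?_, ?_, chain'_stretch h⟩
  · have := List.IsChain.imp (S := fun x y : ℕ => x ≥ y)
      (fun x y (hp : y + k ≤ x ∧ (x % k = a % k → y + k < x)) =>
        le_trans (Nat.le_add_right _ k) hp.1) (chain'_stretch h)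
    exact List.isChain_iff_pairwise.mp this
  · intro y hy
    obtain ⟨x, hx, m, rfl⟩ := stretch_mem hy
    obtain ⟨hpos, hmod⟩ := h.2.1 x hx
    exact ⟨by omega, by rwa [Nat.add_mul_mod_self_left]⟩

lemma Dbound {y : ℕ} {ys : List ℕ} (h : memD' a b k (y :: ys)) : k * ys.length < y := by
  induction ys generalizing y with
  | nil => simpa using (h.2.1 y (List.mem_cons_self)).1
  | cons z zs ih =>
    have h1 : z + k ≤ y := (List.isChain_cons_cons.mp h.2.2).1.1
    have h2 := ih (memD'_tail h)
    simp only [List.length_cons, Nat.mul_succ]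
    omega

lemma stretch_surj (h : memD' a b k m) : ∃ l, memR' a b k l ∧ stretch k l = m := by
  induction m with
  | nil => exact ⟨[], ⟨List.Pairwise.nil, by simp, by simp⟩, rfl⟩
  | cons y ys ih =>
    obtain ⟨xs, hxs, hst⟩ := ih (memD'_tail h)
    have hlen : xs.length = ys.length := by rw [← hst, stretch_length]
    have hb : k * ys.length < y := Dbound h
    obtain ⟨hs, hf, hc⟩ := h
    set x := y - k * ys.length with hxdef
    have hy : y = x + k * ys.length := by omega
    have hstc : stretch k (x :: xs) = y :: ys := by
      rw [stretch_cons, hlen, hst, ← hy]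
    -- head comparison facts when xs is nonempty
    have hhead : ∀ x' xs', xs = x' :: xs' → x' ≤ x := by
      intro x' xs' hxe
      subst hxe
      rw [stretch_cons] at hst
      rw [← hst] at hc
      have := (List.isChain_cons_cons.mp hc).1.1
      have hll : xs'.length + 1 = ys.length := by rw [← hlen]; rfl
      rw [hy, ← hll, Nat.mul_succ] at this
      omega
    refine ⟨x :: xs, ⟨?_, ?_, ?_⟩, hstc⟩
    · refine List.pairwise_cons.mpr ⟨?_, hxs.1⟩
      intro z hz
      cases xs with
      | nil => simp at hz
      | cons x' xs' =>
        have hx'x : x' ≤ x := hhead x' xs' rfl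
        rcases List.mem_cons.mp hz with rfl | hz'
        · exact hx'x
        · exact le_trans (List.rel_of_pairwise_cons hxs.1 hz') hx'x
    · intro z hz
      rcases List.mem_cons.mp hz with rfl | hz'
      · have := hf y (List.mem_cons_self)
        rw [hy, Nat.add_mul_mod_self_left] at this
        exact ⟨by omega, this.2⟩
      · exact hxs.2.1 z hz'
    · intro v hv
      by_cases hxv : x = v
      · subst hxv
        rw [List.count_cons_self]
        suffices hns : x ∉ xs by
          rw [List.count_eq_zero_of_not_mem hns]
        intro hmem
        cases xs with
        | nil => simp at hmem
        | cons x' xs' =>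
          have hx'x : x' ≤ x := hhead x' xs' rfl
          have hxx' : x ≤ x' := by
            rcases List.mem_cons.mp hmem with rfl | hz'
            · exact le_refl x
            · exact List.rel_of_pairwise_cons hxs.1 hz'
          have heq : x' = x := le_antisymm hx'x hxx'
          -- strict condition
          rw [stretch_cons] at hst
          rw [← hst] at hc
          have hymod : y % k = a % k := by rw [hy, Nat.add_mul_mod_self_left]; exact hv
          have := (List.isChain_cons_cons.mp hc).1.2 hymod
          have hll : xs'.length + 1 = ys.length := by rw [← hlen]; rfl
          rw [hy, ← hll, Nat.mul_succ] at this
          omega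
      · rw [List.count_cons_of_ne hxv]
        exact hxs.2.2 v hv

lemma stretch_inj : ∀ l1 l2 : List ℕ, stretch k l1 = stretch k l2 → l1 = l2 := by
  intro l1
  induction l1 with
  | nil =>
    intro l2 h
    cases l2 with
    | nil => rfl
    | cons y ys => rw [stretch_nil, stretch_cons] at h; exact absurd h (by simp)
  | cons x xs ih =>
    intro l2 h
    cases l2 with
    | nil => rw [stretch_nil, stretch_cons] at h; exact absurd h (by simp)
    | cons y ys =>
      rw [stretch_cons, stretch_cons, List.cons.injEq] at h
      obtain ⟨h1, h2⟩ := h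
      have hxy := ih ys h2
      subst hxy
      have : x = y := by omega
      rw [this]

end

/-- Adding `k(ℓ-1), k(ℓ-2), …, k, 0` to the parts is a bijection from `R'_{a,b,k}(ℓ)` onto
`D'_{a,b,k}(ℓ)` preserving `ℓ_a` and `ℓ_b` and increasing the weight by `k·C(ℓ,2)`;
consequently `Σ_{π ∈ D'_{a,b,k}(ℓ)} u^{ℓ_a} v^{ℓ_b} q^{|π|}
  = q^{k C(ℓ,2)} Σ_{π ∈ R'_{a,b,k}(ℓ)} u^{ℓ_a} v^{ℓ_b} q^{|π|}`. -/
theorem shift_R'_to_D' (a b k ℓ : ℕ) (ha : 1 ≤ a) (hab : a < b) (hbk : b ≤ k) :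
    Set.BijOn (stretch k) {l : List ℕ | memR' a b k l ∧ l.length = ℓ}
      {l : List ℕ | memD' a b k l ∧ l.length = ℓ}
    ∧ (∀ l : List ℕ, memR' a b k l → l.length = ℓ →
        lcount k a (stretch k l) = lcount k a l ∧
        lcount k b (stretch k l) = lcount k b l ∧
        (stretch k l).sum = l.sum + k * Nat.choose ℓ 2)
    ∧ (∀ q u v : ℂ, ‖q‖ < 1 →
        ∑' π : {l : List ℕ // memD' a b k l ∧ l.length = ℓ},
            u ^ lcount k a π.1 * v ^ lcount k b π.1 * q ^ π.1.sum
          = q ^ (k * Nat.choose ℓ 2) *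
            ∑' π : {l : List ℕ // memR' a b k l ∧ l.length = ℓ},
              u ^ lcount k a π.1 * v ^ lcount k b π.1 * q ^ π.1.sum) := by
  have hbij : Set.BijOn (stretch k) {l : List ℕ | memR' a b k l ∧ l.length = ℓ}
      {l : List ℕ | memD' a b k l ∧ l.length = ℓ} := by
    refine ⟨?_, ?_, ?_⟩
    · intro l hl
      exact ⟨memD'_stretch hl.1, by rw [stretch_length]; exact hl.2⟩
    · intro l1 _ l2 _ h
      exact stretch_inj l1 l2 h
    · intro m hm
      obtain ⟨l, hl, hst⟩ := stretch_surj hm.1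
      exact ⟨l, ⟨hl, by rw [← stretch_length k l, hst]; exact hm.2⟩, hst⟩
  refine ⟨hbij, ?_, ?_⟩
  · intro l hl hlen
    exact ⟨lcount_stretch k a l, lcount_stretch k b l, by rw [sum_stretch, hlen]⟩
  · intro q u v _
    let e := hbij.equiv (stretch k)
    have key : ∀ π : {l : List ℕ // memR' a b k l ∧ l.length = ℓ},
        ((e π : List ℕ) = stretch k π.1) := fun π => rfl
    have h1 : (∑' π : {l : List ℕ // memD' a b k l ∧ l.length = ℓ},
        u ^ lcount k a π.1 * v ^ lcount k b π.1 * q ^ π.1.sum)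
        = ∑' π : {l : List ℕ // memR' a b k l ∧ l.length = ℓ},
            u ^ lcount k a (e π).1 * v ^ lcount k b (e π).1 * q ^ ((e π).1).sum :=
      (Equiv.tsum_eq e _).symm
    rw [h1, ← tsum_mul_left]
    apply tsum_congr
    intro π
    rw [key π, lcount_stretch, lcount_stretch, sum_stretch, π.2.2, pow_add]
    ring
end

section
/- For integers a, b, k with k ≥ b > a ≥ 1 and m ≥ 1: Σ_{λ ∈ BR_{a,b,k}(m)} u^{ℓ_a(λ)} v^{ℓ_b(λ)} q^{|λ|} = Σ_{h=0}^{m} u^{m−h} v^{h} q^{ma + k·C(h,2) + (b−a)h} [m choose h]_k. -/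
/-- Membership in `BR_{a,b,k}(m)`: partitions `(λ_1,…,λ_m)` with exactly `m` parts, each
`≡ a` or `b (mod k)`, only parts `≡ a (mod k)` possibly repeated, `λ_m ∈ {a, b}`, and for
consecutive parts `λ_i - λ_{i+1} ≤ k` with strict inequality if `λ_{i+1} ≡ a (mod k)`. -/
def memBR (a b k m : ℕ) (l : List ℕ) : Prop :=
  l.Pairwise (· ≥ ·) ∧ l.length = m ∧
    (∀ x ∈ l, 0 < x ∧ (x % k = a % k ∨ x % k = b % k)) ∧
    (∀ x : ℕ, x % k = b % k → l.count x ≤ 1) ∧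
    (l.getLast? = some a ∨ l.getLast? = some b) ∧
    l.Chain' (fun x y => x ≤ y + k ∧ (y % k = a % k → x < y + k))

lemma qPoch_succ (t q : ℂ) (n : ℕ) : qPoch t q (n+1) = qPoch t q n * (1 - t * q ^ n) := by
  simp [qPoch, Finset.prod_range_succ]

lemma qPoch_zero (t q : ℂ) : qPoch t q 0 = 1 := by simp [qPoch]

lemma qPoch_ne_zero {q : ℂ} (hq : ‖q‖ < 1) (n : ℕ) : qPoch q q n ≠ 0 := by
  rw [qPoch]
  apply Finset.prod_ne_zero_iff.2
  intro i _ h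
  have h1 : q * q ^ i = 1 := by linear_combination -h
  have : ‖q * q ^ i‖ < 1 := by
    calc ‖q * q ^ i‖ = ‖q‖ * ‖q‖ ^ i := by simp [norm_mul, norm_pow]
    _ ≤ ‖q‖ * 1 := by
        apply mul_le_mul_of_nonneg_left _ (norm_nonneg q)
        exact pow_le_one₀ (norm_nonneg q) hq.le
    _ < 1 := by simpa using hq
  rw [h1] at this; simp at this

lemma gbinom_zero_right {q : ℂ} (hq : ‖q‖ < 1) (m : ℕ) : gbinom q m 0 = 1 := by
  simp only [gbinom, Nat.zero_le, if_true, qPoch_zero, one_mul, Nat.sub_zero]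
  exact div_self (qPoch_ne_zero hq m)

lemma gbinom_self {q : ℂ} (hq : ‖q‖ < 1) (m : ℕ) : gbinom q m m = 1 := by
  simp only [gbinom, le_refl, if_true, Nat.sub_self, qPoch_zero, mul_one]
  exact div_self (qPoch_ne_zero hq m)

lemma gbinom_of_lt (q : ℂ) {m h : ℕ} (hh : m < h) : gbinom q m h = 0 := by
  simp [gbinom, Nat.not_le.2 hh]

lemma gbinom_pascal {q : ℂ} (hq : ‖q‖ < 1) (m h : ℕ) (hh : h ≤ m) :
    gbinom q (m+1) (h+1) = gbinom q m (h+1) + q^(m-h) * gbinom q m h := by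
  rcases eq_or_lt_of_le hh with rfl | hlt
  · rw [gbinom_self hq, gbinom_of_lt q (Nat.lt_succ_self _), gbinom_self hq]
    simp
  · obtain ⟨d, rfl⟩ : ∃ d, m = h + (d + 1) := ⟨m - h - 1, by omega⟩
    have e1 : h + (d+1) + 1 - (h+1) = d + 1 := by omega
    have e2 : h + (d+1) - (h+1) = d := by omega
    have e3 : h + (d+1) - h = d + 1 := by omega
    rw [gbinom, gbinom, gbinom, if_pos (by omega), if_pos (by omega), if_pos (by omega),
      e1, e2, e3]
    have key : ∀ n : ℕ, qPoch q q (n+1) = qPoch q q n * (1 - q ^ (n+1)) := by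
      intro n; rw [qPoch_succ]; ring_nf
    rw [show h + (d+1) + 1 = (h + (d+1)) + 1 from rfl, key (h + (d+1)), key h, key d]
    have hP := qPoch_ne_zero hq
    have h1 : (1 : ℂ) - q ^ (h+1) ≠ 0 := by
      have := hP (h+1); rw [key h] at this
      exact fun hz => this (by rw [hz, mul_zero])
    have h2 : (1 : ℂ) - q ^ (d+1) ≠ 0 := by
      have := hP (d+1); rw [key d] at this
      exact fun hz => this (by rw [hz, mul_zero])
    have hPh := hP h
    have hPd := hP d
    field_simp
    ring

lemma qbinom_subset_sum {q : ℂ} (hq : ‖q‖ < 1) (m h : ℕ) :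
    ∑ S ∈ (Finset.range m).powersetCard h, q ^ (∑ i ∈ S, i)
      = q ^ (h.choose 2) * gbinom q m h := by
  induction m generalizing h with
  | zero =>
    cases h with
    | zero => simp [gbinom_zero_right hq]
    | succ h =>
      rw [gbinom_of_lt q (Nat.succ_pos h),
        show (Finset.range 0) = (∅ : Finset ℕ) from rfl,
        Finset.powersetCard_eq_empty.2 (by simp)]
      simp
  | succ m ih =>
    cases h with
    | zero => simp [gbinom_zero_right hq, Finset.powersetCard_zero]
    | succ h =>
      rcases le_or_gt (h+1) (m+1) with hle | hlt
      · rw [Finset.range_add_one,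
          Finset.powersetCard_succ_insert (by simp : m ∉ Finset.range m)]
        rw [Finset.sum_union, Finset.sum_image]
        · have step : ∀ S ∈ (Finset.range m).powersetCard h,
              q ^ (∑ i ∈ insert m S, i) = q^m * q ^ (∑ i ∈ S, i) := by
            intro S hS
            rw [Finset.mem_powersetCard] at hS
            have hm : m ∉ S := fun hmem => by
              have := hS.1 hmem; simp at this
            rw [Finset.sum_insert hm, pow_add]
          rw [Finset.sum_congr rfl step, ← Finset.mul_sum, ih, ih,
            gbinom_pascal hq m h (by omega)]
          have : (h+1).choose 2 = h.choose 2 + h := by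
            rw [Nat.choose_two_right, Nat.choose_two_right]; rcases h with _|h <;> simp <;> ring_nf <;> omega
          rw [this, pow_add q (h.choose 2) h]
          have hsplit : q ^ m = q ^ (m - h) * q ^ h := by
            rw [← pow_add]; congr 1; omega
          rw [hsplit]; ring
        · intro S hS T hT hST
          rw [Finset.mem_coe, Finset.mem_powersetCard] at hS hT
          have hmS : m ∉ S := fun hmem => by have := hS.1 hmem; simp at this
          have hmT : m ∉ T := fun hmem => by have := hT.1 hmem; simp at this
          have := congrArg (Finset.erase · m) hST
          simpa [Finset.erase_insert hmS, Finset.erase_insert hmT] using this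
        · rw [Finset.disjoint_left]
          intro S hS hS2
          rw [Finset.mem_powersetCard] at hS
          rw [Finset.mem_image] at hS2
          obtain ⟨T, hT, rfl⟩ := hS2
          have : m ∈ insert m T := Finset.mem_insert_self m T
          have := hS.1 this
          simp at this
      · rw [gbinom_of_lt q hlt]
        rw [Finset.powersetCard_eq_empty.2 (by simp; omega)]
        simp

def gg (a b k : ℕ) (S : Finset ℕ) (i : ℕ) : ℕ :=
  (if i ∈ S then b else a) + k * (S.filter (fun j => i < j)).card

def LL (a b k m : ℕ) (S : Finset ℕ) : List ℕ := (List.range m).map (gg a b k S)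

lemma amod {a b k : ℕ} (hab : a < b) (hbk : b ≤ k) : a % k = a :=
  Nat.mod_eq_of_lt (lt_of_lt_of_le hab hbk)

lemma abmodne {a b k : ℕ} (ha : 1 ≤ a) (hab : a < b) (hbk : b ≤ k) : a % k ≠ b % k := by
  rw [amod hab hbk]
  rcases eq_or_lt_of_le hbk with rfl | hlt
  · rw [Nat.mod_self]; omega
  · rw [Nat.mod_eq_of_lt hlt]; omega

lemma gg_mod (a b k : ℕ) (S : Finset ℕ) (i : ℕ) :
    gg a b k S i % k = (if i ∈ S then b else a) % k := by
  rw [gg, Nat.add_mul_mod_self_left]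

lemma ccard_anti {S : Finset ℕ} {i j : ℕ} (hij : i ≤ j) :
    (S.filter (fun t => j < t)).card ≤ (S.filter (fun t => i < t)).card := by
  apply Finset.card_le_card
  intro t ht
  rw [Finset.mem_filter] at *
  exact ⟨ht.1, lt_of_le_of_lt hij ht.2⟩

lemma ccard_strict_anti {S : Finset ℕ} {i j : ℕ} (hij : i < j) (hj : j ∈ S) :
    (S.filter (fun t => j < t)).card + 1 ≤ (S.filter (fun t => i < t)).card := by
  have hss : (S.filter (fun t => j < t)) ⊂ (S.filter (fun t => i < t)) := by
    constructor
    · intro t ht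
      rw [Finset.mem_filter] at *
      exact ⟨ht.1, lt_trans hij ht.2⟩
    · intro hsub
      have : j ∈ S.filter (fun t => j < t) := hsub (by rw [Finset.mem_filter]; exact ⟨hj, hij⟩)
      rw [Finset.mem_filter] at this
      omega
  have := Finset.card_lt_card hss
  omega

lemma ccard_succ (S : Finset ℕ) (i : ℕ) :
    (S.filter (fun t => i < t)).card
      = (S.filter (fun t => i + 1 < t)).card + (if i + 1 ∈ S then 1 else 0) := by
  split_ifs with h
  · have he : S.filter (fun t => i < t) = insert (i+1) (S.filter (fun t => i + 1 < t)) := by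
      ext t
      rw [Finset.mem_insert, Finset.mem_filter, Finset.mem_filter]
      constructor
      · rintro ⟨htS, hlt⟩
        rcases eq_or_lt_of_le (Nat.succ_le_of_lt hlt) with heq | hlt2
        · exact Or.inl heq.symm
        · exact Or.inr ⟨htS, hlt2⟩
      · rintro (rfl | ⟨htS, hlt⟩)
        · exact ⟨h, Nat.lt_succ_self i⟩
        · exact ⟨htS, by omega⟩
    rw [he, Finset.card_insert_of_notMem (by rw [Finset.mem_filter]; omega)]
  · have he : S.filter (fun t => i < t) = S.filter (fun t => i + 1 < t) := by
      ext t
      rw [Finset.mem_filter, Finset.mem_filter]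
      constructor
      · rintro ⟨htS, hlt⟩
        refine ⟨htS, ?_⟩
        rcases eq_or_lt_of_le (Nat.succ_le_of_lt hlt) with heq | hlt2
        · exact absurd htS (heq ▸ h)
        · exact hlt2
      · rintro ⟨htS, hlt⟩; exact ⟨htS, by omega⟩
    rw [he]; omega

lemma gg_anti {a b k : ℕ} (ha : 1 ≤ a) (hab : a < b) (hbk : b ≤ k)
    {S : Finset ℕ} {i j : ℕ} (hij : i < j) :
    gg a b k S j ≤ gg a b k S i := by
  unfold gg
  by_cases hj : j ∈ S
  · have h1 := ccard_strict_anti hij hj (S := S)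
    have hmul : k * ((S.filter (fun t => j < t)).card + 1)
        ≤ k * (S.filter (fun t => i < t)).card := Nat.mul_le_mul_left k h1
    rw [Nat.mul_add, Nat.mul_one] at hmul
    have h2 : a ≤ if i ∈ S then b else a := by split <;> omega
    rw [if_pos hj]
    omega
  · have h1 := ccard_anti (le_of_lt hij) (S := S)
    have hmul : k * (S.filter (fun t => j < t)).card
        ≤ k * (S.filter (fun t => i < t)).card := Nat.mul_le_mul_left k h1
    have h2 : a ≤ if i ∈ S then b else a := by split <;> omega
    rw [if_neg hj]
    omega

lemma gg_chain {a b k : ℕ} (ha : 1 ≤ a) (hab : a < b) (hbk : b ≤ k)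
    (S : Finset ℕ) (i : ℕ) :
    gg a b k S i ≤ gg a b k S (i+1) + k ∧
      (gg a b k S (i+1) % k = a % k → gg a b k S i < gg a b k S (i+1) + k) := by
  have hcs := ccard_succ S i
  have hmul : k * (S.filter (fun t => i < t)).card
      = k * (S.filter (fun t => i + 1 < t)).card + k * (if i + 1 ∈ S then 1 else 0) := by
    rw [hcs, Nat.mul_add]
  have hmod := gg_mod a b k S (i+1)
  have hne := abmodne ha hab hbk
  constructor
  · unfold gg at *
    split_ifs at * <;> omega
  · intro hy
    have hnot : i + 1 ∉ S := by
      intro hmem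
      rw [if_pos hmem] at hmod
      exact hne (hy.symm.trans hmod)
    unfold gg at *
    rw [if_neg hnot] at hmul ⊢
    have hle : (if i ∈ S then b else a) ≤ b := by split <;> omega
    split_ifs at * <;> omega

lemma countP_range_eq (p : ℕ → Prop) [DecidablePred p] (m : ℕ) :
    (List.range m).countP (fun i => decide (p i)) = ((Finset.range m).filter p).card := by
  induction m with
  | zero => simp
  | succ m ih =>
    rw [List.range_succ, List.countP_append, Finset.range_add_one,
      Finset.filter_insert]
    split_ifs with h
    · rw [Finset.card_insert_of_notMem (by simp)]
      simp [ih, h]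
    · simp [ih, h]

lemma LL_length (a b k m : ℕ) (S : Finset ℕ) : (LL a b k m S).length = m := by
  simp [LL]

lemma LL_getElem (a b k m : ℕ) (S : Finset ℕ) (i : ℕ) (h1 : i < (LL a b k m S).length) :
    (LL a b k m S)[i] = gg a b k S i := by
  simp [LL]

lemma LL_memBR {a b k m : ℕ} (ha : 1 ≤ a) (hab : a < b) (hbk : b ≤ k) (hm : 1 ≤ m)
    {S : Finset ℕ} (hS : S ⊆ Finset.range m) : memBR a b k m (LL a b k m S) := by
  have hlen := LL_length a b k m S
  refine ⟨?_, hlen, ?_, ?_, ?_, ?_⟩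
  · rw [List.pairwise_iff_get]
    intro i j hij
    simp only [List.get_eq_getElem, LL_getElem]
    exact gg_anti ha hab hbk hij
  · intro x hx
    rw [LL, List.mem_map] at hx
    obtain ⟨i, _, rfl⟩ := hx
    constructor
    · have : a ≤ gg a b k S i := by
        unfold gg; split <;> omega
      omega
    · rw [gg_mod]
      split
      · exact Or.inr rfl
      · exact Or.inl rfl
  · intro x hx
    have hcount : (LL a b k m S).count x
        = ((Finset.range m).filter (fun i => gg a b k S i = x)).card := by
      rw [LL, List.count_eq_countP, List.countP_map, ← countP_range_eq]
      congr 1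
    rw [hcount]
    apply Finset.card_le_one.2
    intro i hi j hj
    rw [Finset.mem_filter] at hi hj
    have hiS : i ∈ S := by
      by_contra hiS
      have := gg_mod a b k S i
      rw [if_neg hiS, hi.2, hx] at this
      exact abmodne ha hab hbk this.symm
    have hjS : j ∈ S := by
      by_contra hjS
      have := gg_mod a b k S j
      rw [if_neg hjS, hj.2, hx] at this
      exact abmodne ha hab hbk this.symm
    by_contra hne
    rcases Nat.lt_or_ge i j with hij | hij
    · have h1 := ccard_strict_anti hij hjS (S := S)
      have hmul : k * ((S.filter (fun t => j < t)).card + 1)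
          ≤ k * (S.filter (fun t => i < t)).card := Nat.mul_le_mul_left k h1
      rw [Nat.mul_add, Nat.mul_one] at hmul
      have hx1 : gg a b k S i = gg a b k S j := hi.2.trans hj.2.symm
      unfold gg at hx1
      rw [if_pos hiS, if_pos hjS] at hx1
      have hk : 1 ≤ k := by omega
      omega
    · have hij' : j < i := by omega
      have h1 := ccard_strict_anti hij' hiS (S := S)
      have hmul : k * ((S.filter (fun t => i < t)).card + 1)
          ≤ k * (S.filter (fun t => j < t)).card := Nat.mul_le_mul_left k h1
      rw [Nat.mul_add, Nat.mul_one] at hmul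
      have hx1 : gg a b k S i = gg a b k S j := hi.2.trans hj.2.symm
      unfold gg at hx1
      rw [if_pos hiS, if_pos hjS] at hx1
      have hk : 1 ≤ k := by omega
      omega
  · have hne : LL a b k m S ≠ [] := by
      intro h
      have := LL_length a b k m S
      rw [h] at this
      simp at this
      omega
    rw [List.getLast?_eq_getLast hne, List.getLast_eq_getElem, LL_getElem, LL_length]
    have hfil : (S.filter (fun t => m - 1 < t)) = ∅ := by
      apply Finset.filter_eq_empty_iff.2
      intro t ht
      have := hS ht
      rw [Finset.mem_range] at this
      omega
    unfold gg
    rw [hfil]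
    split
    · right; simp
    · left; simp
  · refine List.isChain_iff_getElem.2 ?_
    intro i hi
    simp only [List.get_eq_getElem, LL_getElem]
    exact gg_chain ha hab hbk S i

lemma sum_map_range (f : ℕ → ℕ) (m : ℕ) :
    ((List.range m).map f).sum = ∑ i ∈ Finset.range m, f i := by
  induction m with
  | zero => simp
  | succ m ih => rw [List.range_succ, List.map_append, List.sum_append,
      Finset.sum_range_succ, ih]; simp

lemma LL_sum {a b k m : ℕ} (hab : a < b) {S : Finset ℕ} (hS : S ⊆ Finset.range m) :
    (LL a b k m S).sum = m * a + (b - a) * S.card + k * (∑ j ∈ S, j) := by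
  rw [LL, sum_map_range]
  have h1 : ∀ i, gg a b k S i
      = (a + (b - a) * (if i ∈ S then 1 else 0)) + k * (S.filter (fun j => i < j)).card := by
    intro i
    unfold gg
    split <;> omega
  rw [Finset.sum_congr rfl (fun i _ => h1 i), Finset.sum_add_distrib, Finset.sum_add_distrib,
    ← Finset.mul_sum, ← Finset.mul_sum]
  congr 1
  · congr 1
    · simp [Finset.sum_const, mul_comm]
    · congr 1
      rw [Finset.sum_ite_mem]
      rw [Finset.inter_eq_right.2 hS]
      simp
  · congr 1
    have h2 : ∀ i, (S.filter (fun j => i < j)).card = ∑ j ∈ S, if i < j then 1 else 0 :=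
      fun i => Finset.card_filter _ _
    rw [Finset.sum_congr rfl (fun i _ => h2 i), Finset.sum_comm]
    apply Finset.sum_congr rfl
    intro j hj
    have hjm : j < m := Finset.mem_range.1 (hS hj)
    have : ∑ i ∈ Finset.range m, (if i < j then 1 else 0)
        = ((Finset.range m).filter (fun i => i < j)).card := (Finset.card_filter _ _).symm
    rw [this]
    have : (Finset.range m).filter (fun i => i < j) = Finset.range j := by
      ext i
      simp only [Finset.mem_filter, Finset.mem_range]
      omega
    rw [this, Finset.card_range]

lemma LL_lcount_b {a b k m : ℕ} (ha : 1 ≤ a) (hab : a < b) (hbk : b ≤ k)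
    {S : Finset ℕ} (hS : S ⊆ Finset.range m) :
    lcount k b (LL a b k m S) = S.card := by
  rw [lcount, ← List.countP_eq_length_filter, LL, List.countP_map, Function.comp_def,
    countP_range_eq (fun i => gg a b k S i % k = b % k)]
  have : ((Finset.range m).filter fun i => gg a b k S i % k = b % k) = S := by
    ext i
    simp only [Finset.mem_filter, Finset.mem_range, gg_mod]
    constructor
    · rintro ⟨him, hmod⟩
      by_contra hiS
      rw [if_neg hiS] at hmod
      exact abmodne ha hab hbk hmod
    · intro hiS
      exact ⟨Finset.mem_range.1 (hS hiS), by rw [if_pos hiS]⟩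
  rw [this]

lemma LL_lcount_a {a b k m : ℕ} (ha : 1 ≤ a) (hab : a < b) (hbk : b ≤ k)
    {S : Finset ℕ} (hS : S ⊆ Finset.range m) :
    lcount k a (LL a b k m S) = m - S.card := by
  rw [lcount, ← List.countP_eq_length_filter, LL, List.countP_map, Function.comp_def,
    countP_range_eq (fun i => gg a b k S i % k = a % k)]
  have : ((Finset.range m).filter fun i => gg a b k S i % k = a % k)
      = Finset.range m \ S := by
    ext i
    simp only [Finset.mem_filter, Finset.mem_range, Finset.mem_sdiff, gg_mod]
    constructor
    · rintro ⟨him, hmod⟩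
      refine ⟨him, fun hiS => ?_⟩
      rw [if_pos hiS] at hmod
      exact abmodne ha hab hbk hmod.symm
    · rintro ⟨him, hiS⟩
      exact ⟨him, by rw [if_neg hiS]⟩
  rw [this, Finset.card_sdiff_of_subset hS, Finset.card_range]

lemma LL_inj {a b k m : ℕ} (ha : 1 ≤ a) (hab : a < b) (hbk : b ≤ k)
    {S T : Finset ℕ} (hS : S ⊆ Finset.range m) (hT : T ⊆ Finset.range m)
    (h : LL a b k m S = LL a b k m T) : S = T := by
  have key : ∀ (U V : Finset ℕ), U ⊆ Finset.range m → LL a b k m U = LL a b k m V →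
      U ⊆ V := by
    intro U V hU heq i hiU
    have him : i < m := Finset.mem_range.1 (hU hiU)
    have h1 : (LL a b k m U)[i]'(by rw [LL_length]; exact him)
        = (LL a b k m V)[i]'(by rw [LL_length]; exact him) := by
      congr 1
    rw [LL_getElem, LL_getElem] at h1
    have h2 : gg a b k U i % k = gg a b k V i % k := by rw [h1]
    rw [gg_mod, gg_mod, if_pos hiU] at h2
    by_contra hiV
    rw [if_neg hiV] at h2
    exact abmodne ha hab hbk h2.symm
  exact le_antisymm (key S T hS h) (key T S hT h.symm)

lemma exists_shift {r k x : ℕ} (hr : 1 ≤ r) (hrk : r ≤ k) (hx : 0 < x)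
    (hmod : x % k = r % k) : ∃ c, x = r + k * c := by
  have hrx : r ≤ x := by
    by_contra hlt
    push_neg at hlt
    have hxk : x < k := lt_of_lt_of_le hlt hrk
    rw [Nat.mod_eq_of_lt hxk] at hmod
    rcases eq_or_lt_of_le hrk with rfl | hrk'
    · rw [Nat.mod_self] at hmod; omega
    · rw [Nat.mod_eq_of_lt hrk'] at hmod; omega
  have hdvd : k ∣ x - r := (Nat.modEq_iff_dvd' hrx).1 hmod.symm
  obtain ⟨c, hc⟩ := hdvd
  exact ⟨c, by omega⟩

lemma count_ge_two {l : List ℕ} {i : ℕ} (h : i + 1 < l.length)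
    (heq : l[i]'(by omega) = l[i+1]'h) : 2 ≤ l.count (l[i]'(by omega)) := by
  have hd : List.drop i l = l[i]'(by omega) :: List.drop (i+1) l :=
    List.drop_eq_getElem_cons (by omega)
  have hd2 : List.drop (i+1) l = l[i+1]'h :: List.drop (i+2) l :=
    List.drop_eq_getElem_cons h
  have hsub := List.drop_sublist i l
  have hcount := hsub.count_le (l[i]'(by omega : i < l.length))
  rw [hd, hd2, ← heq] at hcount
  simp [List.count_cons_self] at hcount
  omega

lemma BR_surj {a b k m : ℕ} (ha : 1 ≤ a) (hab : a < b) (hbk : b ≤ k) (hm : 1 ≤ m)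
    {l : List ℕ} (hl : memBR a b k m l) :
    ∃ S : Finset ℕ, S ⊆ Finset.range m ∧ l = LL a b k m S := by
  obtain ⟨hsort, hlen, hparts, hcount, hlast, hchain⟩ := hl
  subst hlen
  have hk1 : 1 ≤ k := by omega
  set n := l.length with hndef
  set S : Finset ℕ := (Finset.range n).filter (fun i => l.getD i 0 % k = b % k) with hSdef
  have hS : S ⊆ Finset.range n := Finset.filter_subset _ _
  refine ⟨S, hS, ?_⟩
  have hne : l ≠ [] := by
    intro h; rw [h] at hndef; simp at hndef; omega
  have hmemS : ∀ i (h : i < n), (i ∈ S ↔ l[i] % k = b % k) := by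
    intro i h
    rw [hSdef, Finset.mem_filter, Finset.mem_range, List.getD_eq_getElem l 0 h]
    exact ⟨fun hh => hh.2, fun hh => ⟨h, hh⟩⟩
  have key : ∀ t i (hi : i < n), n - 1 - i = t → l[i] = gg a b k S i := by
    intro t
    induction t with
    | zero =>
      intro i hi hit
      have hieq : i = n - 1 := by omega
      subst hieq
      have hlast' : l.getLast? = some (l[n-1]) := by
        rw [List.getLast?_eq_getLast hne, List.getLast_eq_getElem]
      have hfil : (S.filter (fun t => n - 1 < t)) = ∅ := by
        apply Finset.filter_eq_empty_iff.2
        intro t ht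
        have := Finset.mem_range.1 (hS ht)
        omega
      rcases hlast with h | h
      · rw [hlast'] at h
        have hval : l[n-1] = a := by injection h
        have hmem : (n-1) ∉ S := by
          rw [hmemS (n-1) hi, hval]
          exact fun hh => abmodne ha hab hbk hh
        rw [hval, gg, if_neg hmem, hfil]
        simp
      · rw [hlast'] at h
        have hval : l[n-1] = b := by injection h
        have hmem : (n-1) ∈ S := by rw [hmemS (n-1) hi, hval]
        rw [hval, gg, if_pos hmem, hfil]
        simp
    | succ t ih =>
      intro i hi hit
      have hi1 : i + 1 < n := by omega
      have hy : l[i+1] = gg a b k S (i+1) := ih (i+1) hi1 (by omega)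
      have hchain' := List.isChain_iff_getElem.1 hchain i (by omega)
      have hsorted : l[i+1] ≤ l[i] := by
        have := List.pairwise_iff_get.1 hsort ⟨i, by omega⟩ ⟨i+1, by omega⟩
          (by simp [Fin.lt_def])
        simpa using this
      have hxmem : l[i] ∈ l := List.getElem_mem _
      have hxpos : 0 < l[i] := (hparts _ hxmem).1
      have hxmod := (hparts _ hxmem).2
      have hcs := ccard_succ S i
      have hiSiff := hmemS i (by omega)
      have hi1Siff := hmemS (i+1) hi1
      have hggi : gg a b k S i = (if i ∈ S then b else a)
          + k * ((S.filter (fun t => i + 1 < t)).card + (if i + 1 ∈ S then 1 else 0)) := by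
        rw [gg, hcs]
      set c := (S.filter (fun t => i + 1 < t)).card with hcdef
      have hmul2 : k * (c + 2) = k * c + 2 * k := by ring
      have hmul1 : k * (c + 1) = k * c + k := by ring
      by_cases hi1S : i + 1 ∈ S
      · have hyval : l[i+1] = b + k * c := by rw [hy, gg, if_pos hi1S]
        rw [hggi, if_pos hi1S]
        rcases hxmod with hxa | hxb
        · have hiS : i ∉ S := by
            rw [hiSiff, hxa]
            exact fun hh => abmodne ha hab hbk hh
          obtain ⟨cx, hcx⟩ := exists_shift ha (by omega) hxpos hxa
          have hq1 : k * c < k * cx := by omega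
          have hb1 : c < cx := Nat.lt_of_mul_lt_mul_left hq1
          have hq2 : k * cx < k * (c + 2) := by omega
          have hb2 : cx < c + 2 := Nat.lt_of_mul_lt_mul_left hq2
          have hcxe : cx = c + 1 := by omega
          rw [hcxe] at hcx
          rw [if_neg hiS]
          omega
        · have hiS : i ∈ S := by rw [hiSiff, hxb]
          obtain ⟨cx, hcx⟩ := exists_shift (by omega : 1 ≤ b) hbk hxpos hxb
          have hq1 : k * c ≤ k * cx := by omega
          have hb1 : c ≤ cx := Nat.le_of_mul_le_mul_left hq1 (by omega)
          have hq2 : k * cx < k * (c + 2) := by omega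
          have hb2 : cx < c + 2 := Nat.lt_of_mul_lt_mul_left hq2
          have hne2 : cx ≠ c := by
            intro hce
            rw [hce] at hcx
            have heq2 : l[i] = l[i+1] := by omega
            have h2 := count_ge_two hi1 heq2
            have h1 := hcount l[i] hxb
            omega
          have hcxe : cx = c + 1 := by omega
          rw [hcxe] at hcx
          rw [if_pos hiS]
          omega
      · have hyval : l[i+1] = a + k * c := by rw [hy, gg, if_neg hi1S]
        have hymod : l[i+1] % k = a % k := by rw [hyval, Nat.add_mul_mod_self_left]
        have hstrict := hchain'.2 hymod
        rw [hggi, if_neg hi1S]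
        rcases hxmod with hxa | hxb
        · have hiS : i ∉ S := by
            rw [hiSiff, hxa]
            exact fun hh => abmodne ha hab hbk hh
          obtain ⟨cx, hcx⟩ := exists_shift ha (by omega) hxpos hxa
          have hq1 : k * c ≤ k * cx := by omega
          have hb1 : c ≤ cx := Nat.le_of_mul_le_mul_left hq1 (by omega)
          have hq2 : k * cx < k * (c + 1) := by omega
          have hb2 : cx < c + 1 := Nat.lt_of_mul_lt_mul_left hq2
          have hcxe : cx = c := by omega
          rw [hcxe] at hcx
          rw [if_neg hiS]
          have hmul0 : k * (c + 0) = k * c := by ring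
          omega
        · have hiS : i ∈ S := by rw [hiSiff, hxb]
          obtain ⟨cx, hcx⟩ := exists_shift (by omega : 1 ≤ b) hbk hxpos hxb
          have hb1 : c ≤ cx := by
            have hmul3 : k * (cx + 1) = k * cx + k := by ring
            have hq : k * c < k * (cx + 1) := by omega
            have := Nat.lt_of_mul_lt_mul_left hq
            omega
          have hq2 : k * cx < k * (c + 1) := by omega
          have hb2 : cx < c + 1 := Nat.lt_of_mul_lt_mul_left hq2
          have hcxe : cx = c := by omega
          rw [hcxe] at hcx
          rw [if_pos hiS]
          have hmul0 : k * (c + 0) = k * c := by ring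
          omega
  apply List.ext_getElem
  · rw [LL_length]
  · intro i h1 h2
    rw [LL_getElem]
    exact key (n - 1 - i) i h1 rfl


/-- Generating function for the partitions in `BR_{a,b,k}(m)`:
`Σ_{λ ∈ BR_{a,b,k}(m)} u^{ℓ_a} v^{ℓ_b} q^{|λ|}
  = Σ_{h=0}^{m} u^{m-h} v^h q^{ma + k C(h,2) + (b-a)h} [m, h]_k`. -/
theorem gen_BR_m (a b k m : ℕ) (ha : 1 ≤ a) (hab : a < b) (hbk : b ≤ k)
    (hm : 1 ≤ m) (q u v : ℂ) (hq : ‖q‖ < 1) :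
    ∑ᶠ l ∈ {l : List ℕ | memBR a b k m l},
        u ^ lcount k a l * v ^ lcount k b l * q ^ l.sum
      = ∑ h ∈ Finset.range (m + 1), u ^ (m - h) * v ^ h *
          q ^ (m * a + k * Nat.choose h 2 + (b - a) * h) * gbinom (q ^ k) m h := by
  have hk1 : 1 ≤ k := by omega
  have hqk : ‖q ^ k‖ < 1 := by
    rw [norm_pow]
    exact pow_lt_one₀ (norm_nonneg q) hq (by omega)
  have hset : {l : List ℕ | memBR a b k m l}
      = ↑(((Finset.range m).powerset).image (LL a b k m)) := by
    ext l
    simp only [Set.mem_setOf_eq, Finset.coe_image, Set.mem_image, Finset.mem_coe,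
      Finset.mem_powerset]
    constructor
    · intro hl
      obtain ⟨S, hS, rfl⟩ := BR_surj ha hab hbk hm hl
      exact ⟨S, hS, rfl⟩
    · rintro ⟨S, hS, rfl⟩
      exact LL_memBR ha hab hbk hm hS
  rw [hset, finsum_mem_coe_finset, Finset.sum_image]
  · have hterm : ∀ S ∈ (Finset.range m).powerset,
        u ^ lcount k a (LL a b k m S) * v ^ lcount k b (LL a b k m S)
            * q ^ (LL a b k m S).sum
        = u ^ (m - S.card) * v ^ S.card
            * (q ^ (m * a + (b - a) * S.card) * (q ^ k) ^ (∑ j ∈ S, j)) := by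
      intro S hS
      rw [Finset.mem_powerset] at hS
      rw [LL_lcount_a ha hab hbk hS, LL_lcount_b ha hab hbk hS, LL_sum hab hS,
        pow_add, pow_add, ← pow_mul]
    rw [Finset.sum_congr rfl hterm, Finset.sum_powerset, Finset.card_range]
    apply Finset.sum_congr rfl
    intro h hh
    rw [Finset.mem_range] at hh
    have hcard : ∀ S ∈ (Finset.range m).powersetCard h, S.card = h := by
      intro S hS
      exact (Finset.mem_powersetCard.1 hS).2
    have : ∀ S ∈ (Finset.range m).powersetCard h,
        u ^ (m - S.card) * v ^ S.card * (q ^ (m * a + (b - a) * S.card)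
          * (q ^ k) ^ (∑ j ∈ S, j))
        = (u ^ (m - h) * v ^ h * q ^ (m * a + (b - a) * h)) * (q ^ k) ^ (∑ j ∈ S, j) := by
      intro S hS
      rw [hcard S hS]
      ring
    rw [Finset.sum_congr rfl this, ← Finset.mul_sum, qbinom_subset_sum hqk]
    have hexp : q ^ (m * a + k * h.choose 2 + (b - a) * h)
        = q ^ (m * a + (b - a) * h) * (q ^ k) ^ h.choose 2 := by
      rw [← pow_mul, ← pow_add]
      congr 1
      ring
    rw [hexp]
    ring
  · intro S hS T hT hST
    rw [Finset.mem_coe, Finset.mem_powerset] at hS hT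
    exact LL_inj ha hab hbk hS hT hST
end
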